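/- Let τ_i (0 ≤ i ≤ m) be nonnegative-integer random variables with τ_0 = 1 a.s., and suppose for i ≥ 1: P(τ_i = 1) = w/(w+i), and conditioned on an event of probability 1/(w+i) for each j < i, τ_i is distributed as 1 + τ_j (with these events partitioning the complement of {τ_i = 1}). Then E[τ_i] = 1 + ∑_{j=1}^{i} 1/(w+j) for all 0 ≤ i ≤ m. -/

import Mathlib

open MeasureTheory ProbabilityTheory Finset
open scoped ENNReal

/-- Lebesgue integral of an ℕ-valued function over a set, as a sum. -/
lemma ah_lintegral_nat_inter {Ω : Type*} [MeasurableSpace Ω] (μ : Measure Ω)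
    {f : Ω → ℕ} (hf : Measurable f) (S : Set Ω) :
    ∫⁻ ω in S, (f ω : ℝ≥0∞) ∂μ = ∑' n : ℕ, n * μ ({ω | f ω = n} ∩ S) := by
  have hmeas : ∀ n : ℕ, MeasurableSet {ω | f ω = n} := fun n =>
    hf (measurableSet_singleton n)
  have hpt : ∀ ω, (f ω : ℝ≥0∞)
      = ∑' n : ℕ, Set.indicator {ω | f ω = n} (fun _ => (n : ℝ≥0∞)) ω := by
    intro ω
    rw [tsum_eq_single (f ω)]
    · simp
    · intro n hn
      exact Set.indicator_of_notMem (by simpa [eq_comm] using hn) _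
  calc ∫⁻ ω in S, (f ω : ℝ≥0∞) ∂μ
      = ∫⁻ ω in S, ∑' n : ℕ, Set.indicator {ω | f ω = n} (fun _ => (n : ℝ≥0∞)) ω ∂μ :=
        lintegral_congr fun ω => hpt ω
    _ = ∑' n : ℕ, ∫⁻ ω in S, Set.indicator {ω | f ω = n} (fun _ => (n : ℝ≥0∞)) ω ∂μ :=
        lintegral_tsum fun n =>
          ((measurable_const.indicator (hmeas n))).aemeasurable
    _ = ∑' n : ℕ, n * μ ({ω | f ω = n} ∩ S) := by
        refine tsum_congr fun n => ?_
        rw [lintegral_indicator (hmeas n), setLIntegral_const,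
          Measure.restrict_apply (hmeas n)]

lemma ah_wpos (w : ℕ) (hw : 1 ≤ w) (x : ℝ≥0∞) : (0 : ℝ≥0∞) < (w : ℝ≥0∞) + x :=
  lt_of_lt_of_le (by exact_mod_cast (by omega : 0 < w)) le_self_add

lemma ah_sum_ne_top (w : ℕ) (hw : 1 ≤ w) (i : ℕ) :
    (∑ j ∈ Finset.Icc 1 i, 1 / ((w : ℝ≥0∞) + j)) ≠ ⊤ := by
  refine (ENNReal.sum_lt_top.2 fun j _ => ?_).ne
  rw [one_div, ENNReal.inv_lt_top]
  exact ah_wpos w hw _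

lemma ah_key (w : ℕ) (hw : 1 ≤ w) (i : ℕ) :
    (1 + ∑ j ∈ Finset.Icc 1 i, 1 / ((w : ℝ≥0∞) + j)) * ((w : ℝ≥0∞) + i)
      = w + ∑ j ∈ Finset.range i,
          (1 + (1 + ∑ k ∈ Finset.Icc 1 j, 1 / ((w : ℝ≥0∞) + k))) := by
  induction i with
  | zero => simp
  | succ i ih =>
      have hD0 : ((w : ℝ≥0∞) + i + 1) ≠ 0 := by
        have := ah_wpos w hw ((i : ℝ≥0∞) + 1)
        rw [← add_assoc] at this
        exact this.ne'
      have hDt : ((w : ℝ≥0∞) + i + 1) ≠ ⊤ := by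
        refine ENNReal.add_ne_top.2 ⟨ENNReal.add_ne_top.2 ⟨?_, ?_⟩, ENNReal.one_ne_top⟩ <;>
          exact ENNReal.natCast_ne_top _
      have hcancel : (1 / ((w : ℝ≥0∞) + i + 1)) * ((w : ℝ≥0∞) + i + 1) = 1 := by
        rw [one_div, ENNReal.inv_mul_cancel hD0 hDt]
      rw [Finset.sum_range_succ, Finset.sum_Icc_succ_top (by omega : 1 ≤ i + 1)]
      push_cast
      rw [show ((w : ℝ≥0∞) + ((i : ℝ≥0∞) + 1)) = (w : ℝ≥0∞) + i + 1 from (add_assoc _ _ _).symm]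
      rw [show (1 + (∑ j ∈ Finset.Icc 1 i, 1 / ((w : ℝ≥0∞) + j) + 1 / ((w : ℝ≥0∞) + i + 1)))
            * ((w : ℝ≥0∞) + i + 1)
          = (1 + ∑ j ∈ Finset.Icc 1 i, 1 / ((w : ℝ≥0∞) + j)) * ((w : ℝ≥0∞) + i)
            + ((1 + ∑ j ∈ Finset.Icc 1 i, 1 / ((w : ℝ≥0∞) + j))
              + (1 / ((w : ℝ≥0∞) + i + 1)) * ((w : ℝ≥0∞) + i + 1)) from by ring,
        ih, hcancel]
      ring

/-- **Recursive characterization of the hash-count distribution in AnchorHash.**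
`τ i` (for `0 ≤ i ≤ m`) are nonnegative-integer random variables with `τ 0 = 1` a.s.;
for `i ≥ 1`, `P(τ i = 1) = w/(w+i)` and, for each `j < i`, conditioned on an event
`B j` of probability `1/(w+i)`, `τ i` is distributed as `1 + τ j`, the events `B j`
(for `j < i`) partitioning the complement of `{τ i = 1}`.
Then `E[τ i] = 1 + ∑_{j=1}^{i} 1/(w+j)`. -/
theorem anchorhash_recursive_expectation
    {Ω : Type*} [MeasurableSpace Ω] (μ : Measure Ω) [IsProbabilityMeasure μ]
    (m w : ℕ) (hw : 1 ≤ w) (τ : ℕ → Ω → ℕ)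
    (h_meas : ∀ i, i ≤ m → Measurable (τ i))
    (h0 : ∀ᵐ ω ∂μ, τ 0 ω = 1)
    (hrec : ∀ i, 1 ≤ i → i ≤ m → ∃ B : ℕ → Set Ω,
      (∀ j, j < i → MeasurableSet (B j))
      ∧ (∀ j l, j < i → l < i → j ≠ l → Disjoint (B j) (B l))
      ∧ (∀ j, j < i → Disjoint {ω | τ i ω = 1} (B j))
      ∧ (∀ j, j < i → μ (B j) = 1 / ((w : ℝ≥0∞) + i))
      ∧ μ {ω | τ i ω = 1} = (w : ℝ≥0∞) / ((w : ℝ≥0∞) + i)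
      ∧ {ω | τ i ω ≠ 1} = ⋃ j ∈ Finset.range i, B j
      ∧ ∀ j, j < i → ∀ n : ℕ,
          μ ({ω | τ i ω = n} ∩ B j) = μ {ω | 1 + τ j ω = n} * μ (B j)) :
    ∀ i, i ≤ m → ∫ ω, (τ i ω : ℝ) ∂μ = 1 + ∑ j ∈ Finset.Icc 1 i, 1 / ((w : ℝ) + j) := by
  have hL : ∀ i, i ≤ m → ∫⁻ ω, (τ i ω : ℝ≥0∞) ∂μ
      = 1 + ∑ j ∈ Finset.Icc 1 i, 1 / ((w : ℝ≥0∞) + j) := by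
    intro i
    induction i using Nat.strong_induction_on with
    | _ i IH =>
      intro him
      rcases Nat.eq_zero_or_pos i with rfl | hi1
      · have hae : ∀ᵐ ω ∂μ, (τ 0 ω : ℝ≥0∞) = 1 := h0.mono fun ω h => by simp [h]
        rw [lintegral_congr_ae hae, lintegral_one, measure_univ]
        simp
      · obtain ⟨B, hBm, hBd, hBd1, hBμ, h1μ, hcover, hmix⟩ := hrec i hi1 him
        have hmi := h_meas i him
        have hs1 : MeasurableSet {ω | τ i ω = 1} := hmi (measurableSet_singleton 1)
        have hDne : ((w : ℝ≥0∞) + i) ≠ 0 := (ah_wpos w hw i).ne'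
        have hDnt : ((w : ℝ≥0∞) + i) ≠ ⊤ :=
          ENNReal.add_ne_top.2 ⟨ENNReal.natCast_ne_top _, ENNReal.natCast_ne_top _⟩
        have hcompl : {ω | τ i ω = 1}ᶜ = ⋃ j ∈ Finset.range i, B j := by
          rw [← hcover]; rfl
        have hpart1 : ∫⁻ ω in {ω | τ i ω = 1}, (τ i ω : ℝ≥0∞) ∂μ
            = (w : ℝ≥0∞) / ((w : ℝ≥0∞) + i) := by
          have hone : ∫⁻ ω in {ω | τ i ω = 1}, (τ i ω : ℝ≥0∞) ∂μ
              = ∫⁻ _ in {ω | τ i ω = 1}, (1 : ℝ≥0∞) ∂μ :=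
            setLIntegral_congr_fun hs1
              (fun ω hω => by simp [Set.mem_setOf_eq.mp hω])
          rw [hone, setLIntegral_one, h1μ]
        have hBpart : ∀ j ∈ Finset.range i, ∫⁻ ω in B j, (τ i ω : ℝ≥0∞) ∂μ
            = (1 + (1 + ∑ k ∈ Finset.Icc 1 j, 1 / ((w : ℝ≥0∞) + k)))
              * (1 / ((w : ℝ≥0∞) + i)) := by
          intro j hj
          rw [Finset.mem_range] at hj
          have hjm : j ≤ m := le_trans (le_of_lt hj) him
          have hfj : Measurable fun ω => 1 + τ j ω := measurable_const.add (h_meas j hjm)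
          have e2 : ∫⁻ ω, ((1 + τ j ω : ℕ) : ℝ≥0∞) ∂μ
              = ∑' n : ℕ, n * μ {ω | 1 + τ j ω = n} := by
            have h := ah_lintegral_nat_inter μ hfj Set.univ
            simpa using h
          have e3 : ∫⁻ ω, ((1 + τ j ω : ℕ) : ℝ≥0∞) ∂μ
              = 1 + (1 + ∑ k ∈ Finset.Icc 1 j, 1 / ((w : ℝ≥0∞) + k)) := by
            have hcongr : ∫⁻ ω, ((1 + τ j ω : ℕ) : ℝ≥0∞) ∂μ
                = ∫⁻ ω, (1 : ℝ≥0∞) + (τ j ω : ℝ≥0∞) ∂μ :=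
              lintegral_congr fun ω => by push_cast; ring
            rw [hcongr, lintegral_add_left measurable_const, lintegral_one, measure_univ,
              IH j hj hjm]
          calc ∫⁻ ω in B j, (τ i ω : ℝ≥0∞) ∂μ
              = ∑' n : ℕ, n * μ ({ω | τ i ω = n} ∩ B j) :=
                ah_lintegral_nat_inter μ hmi (B j)
            _ = ∑' n : ℕ, (n * μ {ω | 1 + τ j ω = n}) * μ (B j) := by
                refine tsum_congr fun n => ?_
                rw [hmix j hj n, mul_assoc]
            _ = (∑' n : ℕ, n * μ {ω | 1 + τ j ω = n}) * μ (B j) :=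
                ENNReal.tsum_mul_right
            _ = (1 + (1 + ∑ k ∈ Finset.Icc 1 j, 1 / ((w : ℝ≥0∞) + k)))
                  * (1 / ((w : ℝ≥0∞) + i)) := by
                rw [← e2, e3, hBμ j hj]
        have hpd : Set.PairwiseDisjoint (↑(Finset.range i) : Set ℕ) B := by
          intro a ha b hb hab
          exact hBd a b (Finset.mem_range.mp (Finset.mem_coe.mp ha))
            (Finset.mem_range.mp (Finset.mem_coe.mp hb)) hab
        calc ∫⁻ ω, (τ i ω : ℝ≥0∞) ∂μ
            = ∫⁻ ω in {ω | τ i ω = 1}, (τ i ω : ℝ≥0∞) ∂μ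
              + ∫⁻ ω in {ω | τ i ω = 1}ᶜ, (τ i ω : ℝ≥0∞) ∂μ :=
              (lintegral_add_compl _ hs1).symm
          _ = (w : ℝ≥0∞) / ((w : ℝ≥0∞) + i)
              + ∑ j ∈ Finset.range i, ∫⁻ ω in B j, (τ i ω : ℝ≥0∞) ∂μ := by
              rw [hpart1, hcompl,
                lintegral_biUnion_finset hpd (fun b hb => hBm b (Finset.mem_range.mp hb)) _]
          _ = (w : ℝ≥0∞) / ((w : ℝ≥0∞) + i)
              + ∑ j ∈ Finset.range i,
                  (1 + (1 + ∑ k ∈ Finset.Icc 1 j, 1 / ((w : ℝ≥0∞) + k)))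
                    * (1 / ((w : ℝ≥0∞) + i)) := by
              rw [Finset.sum_congr rfl hBpart]
          _ = ((w : ℝ≥0∞) + ∑ j ∈ Finset.range i,
                  (1 + (1 + ∑ k ∈ Finset.Icc 1 j, 1 / ((w : ℝ≥0∞) + k))))
                * (1 / ((w : ℝ≥0∞) + i)) := by
              rw [← Finset.sum_mul, add_mul, div_eq_mul_inv, one_div]
          _ = 1 + ∑ j ∈ Finset.Icc 1 i, 1 / ((w : ℝ≥0∞) + j) := by
              rw [← ah_key w hw i, one_div, mul_assoc,
                ENNReal.mul_inv_cancel hDne hDnt, mul_one]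
  intro i him
  have hmr : Measurable fun ω => (τ i ω : ℝ) :=
    measurable_from_top.comp (h_meas i him)
  rw [integral_eq_lintegral_of_nonneg_ae (ae_of_all _ fun ω => Nat.cast_nonneg _)
    hmr.aestronglyMeasurable]
  have : ∫⁻ ω, ENNReal.ofReal ((τ i ω : ℝ)) ∂μ = ∫⁻ ω, (τ i ω : ℝ≥0∞) ∂μ :=
    lintegral_congr fun ω => ENNReal.ofReal_natCast _
  rw [this, hL i him, ENNReal.toReal_add ENNReal.one_ne_top (ah_sum_ne_top w hw i),
    ENNReal.toReal_one, ENNReal.toReal_sum (fun j hj => by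
      rw [one_div, Ne, ENNReal.inv_eq_top]
      exact (ah_wpos w hw j).ne')]
  congr 1
  refine Finset.sum_congr rfl fun j hj => ?_
  rw [ENNReal.toReal_div, ENNReal.toReal_one, ENNReal.toReal_add
    (ENNReal.natCast_ne_top _) (ENNReal.natCast_ne_top _),
    ENNReal.toReal_natCast, ENNReal.toReal_natCast]
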